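/- Generalized Fuchs–van de Graaf inequalities: For all d×d complex positive semidefinite matrices A and B, Tr[A] + Tr[B] − 2·Tr[√A·√B] ≤ ‖A − B‖₁ ≤ √( (Tr[A] + Tr[B])² − 4·‖√A·√B‖₁² ). -/

import Mathlib

open scoped ComplexOrder Classical

noncomputable section

namespace QHT

variable {ι : Type*} [Fintype ι] [DecidableEq ι]

/-- The former `Matrix.PosSemidef.sqrt` (removed from Mathlib), spelled out with its old definition. -/
def posSemidefSqrt {A : Matrix ι ι ℂ} (h : A.PosSemidef) : Matrix ι ι ℂ :=
  (h.1.eigenvectorUnitary : Matrix ι ι ℂ) *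
    Matrix.diagonal ((↑) ∘ (Real.sqrt ∘ h.1.eigenvalues)) *
    (star h.1.eigenvectorUnitary : Matrix ι ι ℂ)

/-- Trace norm of a complex matrix: `Tr[√(Aᴴ A)]`. -/
def traceNorm (A : Matrix ι ι ℂ) : ℝ :=
  ((posSemidefSqrt (Matrix.posSemidef_conjTranspose_mul_self A)).trace).re

/-- A quantum state: positive semidefinite with unit trace. -/
def IsState (ρ : Matrix ι ι ℂ) : Prop := ρ.PosSemidef ∧ ρ.trace = 1

/-- Positive semidefinite square root (junk value `0` off the PSD matrices). -/
def matSqrt (A : Matrix ι ι ℂ) : Matrix ι ι ℂ :=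
  if h : A.PosSemidef then posSemidefSqrt h else 0

/-- Real power of a Hermitian matrix, applying `x ↦ x ^ s` to positive
eigenvalues and `x ↦ 0` to the remaining ones (so `A ^ 0` is the support
projection); junk value `0` off the Hermitian matrices. -/
def matRpow (A : Matrix ι ι ℂ) (s : ℝ) : Matrix ι ι ℂ :=
  if h : A.IsHermitian then
    (h.eigenvectorUnitary : Matrix ι ι ℂ) *
      Matrix.diagonal (fun i =>
        ((if 0 < h.eigenvalues i then (h.eigenvalues i) ^ s else 0 : ℝ) : ℂ)) *
      (star (h.eigenvectorUnitary : Matrix ι ι ℂ))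
  else 0

/-- Fidelity `F(ρ,σ) = ‖√ρ √σ‖₁²`. -/
def Fid (ρ σ : Matrix ι ι ℂ) : ℝ := (traceNorm (matSqrt ρ * matSqrt σ)) ^ 2

/-- Holevo fidelity `F_H(ρ,σ) = (Tr[√ρ √σ])²`. -/
def FidH (ρ σ : Matrix ι ι ℂ) : ℝ := (((matSqrt ρ * matSqrt σ).trace).re) ^ 2

/-- `Q_s(A‖B) = Tr[A^s B^{1-s}]`. -/
def Qs (s : ℝ) (A B : Matrix ι ι ℂ) : ℝ := ((matRpow A s * matRpow B (1 - s)).trace).re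

/-- `Q_min(A‖B) = min_{s ∈ [0,1]} Q_s(A‖B)`. -/
def Qmin (A B : Matrix ι ι ℂ) : ℝ :=
  sInf { x : ℝ | ∃ s ∈ Set.Icc (0 : ℝ) 1, x = Qs s A B }

/-- Bures distance. -/
def dB (ρ σ : Matrix ι ι ℂ) : ℝ := Real.sqrt (2 * (1 - Real.sqrt (Fid ρ σ)))

/-- Quantum Hellinger distance. -/
def dH (ρ σ : Matrix ι ι ℂ) : ℝ := Real.sqrt (2 * (1 - Real.sqrt (FidH ρ σ)))

/-- `n`-fold Kronecker (tensor) power of a matrix. -/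
def tensorPow {d : ℕ} (A : Matrix (Fin d) (Fin d) ℂ) (n : ℕ) :
    Matrix (Fin n → Fin d) (Fin n → Fin d) ℂ :=
  Matrix.of fun i j => ∏ k, A (i k) (j k)

/-- Optimal error probability of symmetric binary quantum hypothesis testing
with `n` copies. -/
def pErr {d : ℕ} (p : ℝ) (ρ : Matrix (Fin d) (Fin d) ℂ) (q : ℝ)
    (σ : Matrix (Fin d) (Fin d) ℂ) (n : ℕ) : ℝ :=
  sInf { x : ℝ | ∃ Λ : Matrix (Fin n → Fin d) (Fin n → Fin d) ℂ,
    Λ.PosSemidef ∧ (1 - Λ).PosSemidef ∧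
    x = p * (((1 - Λ) * tensorPow ρ n).trace).re + q * ((Λ * tensorPow σ n).trace).re }

/-- Sample complexity of symmetric binary quantum hypothesis testing. -/
def sampleComplexity {d : ℕ} (p : ℝ) (ρ : Matrix (Fin d) (Fin d) ℂ) (q : ℝ)
    (σ : Matrix (Fin d) (Fin d) ℂ) (ε : ℝ) : ℕ :=
  sInf { n : ℕ | 1 ≤ n ∧ pErr p ρ q σ n ≤ ε }

/-- Optimal type II error `β_ε(ρ‖σ)` of asymmetric hypothesis testing. -/
def betaErr (ε : ℝ) (ρ σ : Matrix ι ι ℂ) : ℝ :=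
  sInf { x : ℝ | ∃ Λ : Matrix ι ι ℂ, Λ.PosSemidef ∧ (1 - Λ).PosSemidef ∧
    (((1 - Λ) * ρ).trace).re ≤ ε ∧ x = ((Λ * σ).trace).re }

/-- Sample complexity of asymmetric binary quantum hypothesis testing. -/
def sampleComplexityAsym {d : ℕ} (ρ σ : Matrix (Fin d) (Fin d) ℂ) (ε δ : ℝ) : ℕ :=
  sInf { n : ℕ | 1 ≤ n ∧ betaErr ε (tensorPow ρ n) (tensorPow σ n) ≤ δ }

/-- Petz–Rényi divergence `D_α(ρ‖σ)`. -/
def petzRenyi (α : ℝ) (ρ σ : Matrix ι ι ℂ) : ℝ :=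
  (1 / (α - 1)) * Real.log (((matRpow ρ α * matRpow σ (1 - α)).trace).re)

/-- Sandwiched Rényi divergence `D̃_α(ρ‖σ)`. -/
def sandwichedRenyi (α : ℝ) (ρ σ : Matrix ι ι ℂ) : ℝ :=
  (1 / (α - 1)) * Real.log
    (((matRpow (matRpow σ ((1 - α) / (2 * α)) * ρ * matRpow σ ((1 - α) / (2 * α))) α).trace).re)


open scoped MatrixOrder in
lemma posSemidefSqrt_eq_cfc {A : Matrix ι ι ℂ} (h : A.PosSemidef) :
    posSemidefSqrt h = CFC.sqrt A := by
  rw [CFC.sqrt_eq_real_sqrt A h.nonneg, cfcₙ_eq_cfc, h.1.cfc_eq]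
  rfl

open scoped MatrixOrder in
lemma psd_sqrt_psd {A : Matrix ι ι ℂ} (h : A.PosSemidef) : (posSemidefSqrt h).PosSemidef := by
  rw [posSemidefSqrt_eq_cfc]
  exact Matrix.nonneg_iff_posSemidef.mp (CFC.sqrt_nonneg A)

open scoped MatrixOrder in
lemma psd_sqrt_mul_self {A : Matrix ι ι ℂ} (h : A.PosSemidef) :
    posSemidefSqrt h * posSemidefSqrt h = A := by
  rw [posSemidefSqrt_eq_cfc]
  exact CFC.sqrt_mul_sqrt_self A h.nonneg

open scoped MatrixOrder in
lemma psd_eq_sqrt_of_sq_eq {C N : Matrix ι ι ℂ} (hC : C.PosSemidef) (hN : N.PosSemidef)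
    (hsq : C ^ 2 = N) : C = posSemidefSqrt hN := by
  rw [posSemidefSqrt_eq_cfc]
  exact (CFC.sqrt_unique (by rw [← hsq, sq]) hC.nonneg).symm

open Matrix

/-- diagonal entries of a PSD matrix have nonneg real part -/
lemma diag_re_nonneg {M : Matrix ι ι ℂ} (hM : M.PosSemidef) (i : ι) :
    0 ≤ (M i i).re := by
  have h := hM.re_dotProduct_nonneg (Pi.single i 1)
  simpa [dotProduct, mulVec, Pi.single_apply, Finset.sum_ite_eq, Finset.sum_ite_eq'] using h

lemma trace_re_nonneg {M : Matrix ι ι ℂ} (hM : M.PosSemidef) :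
    0 ≤ (M.trace).re := by
  rw [Matrix.trace, Complex.re_sum]
  exact Finset.sum_nonneg fun i _ => diag_re_nonneg hM i

/-- trace of product of PSD matrices has nonneg real part -/
lemma trace_mul_psd_re_nonneg {M N : Matrix ι ι ℂ} (hM : M.PosSemidef) (hN : N.PosSemidef) :
    0 ≤ ((M * N).trace).re := by
  have hS := psd_sqrt_psd hN
  have hSH : (posSemidefSqrt hN).conjTranspose = posSemidefSqrt hN := hS.1
  have h : M * N = M * posSemidefSqrt hN * posSemidefSqrt hN := by rw [mul_assoc, psd_sqrt_mul_self hN]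
  rw [h, trace_mul_cycle]
  have : posSemidefSqrt hN * M * posSemidefSqrt hN = (posSemidefSqrt hN)ᴴ * M * posSemidefSqrt hN := by rw [hSH]
  rw [this]
  exact trace_re_nonneg (hM.conjTranspose_mul_mul_same _)



omit [DecidableEq ι] in
lemma trace_conjTranspose_mul (G H : Matrix ι ι ℂ) :
    (Gᴴ * H).trace = ∑ p : ι × ι, star (G p.1 p.2) * H p.1 p.2 := by
  conv_rhs => rw [Fintype.sum_prod_type]
  rw [Finset.sum_comm]
  simp [Matrix.trace, Matrix.diag, Matrix.mul_apply, Matrix.conjTranspose_apply]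

omit [DecidableEq ι] in
lemma trace_conjTranspose_mul_self_re (G : Matrix ι ι ℂ) :
    ((Gᴴ * G).trace).re = ∑ p : ι × ι, ‖G p.1 p.2‖ ^ 2 := by
  rw [trace_conjTranspose_mul, Complex.re_sum]
  congr 1; ext p
  rw [Complex.star_def, ← Complex.normSq_eq_conj_mul_self, Complex.ofReal_re, Complex.sq_norm]

omit [DecidableEq ι] in
lemma trace_conjTranspose_mul_self_re_nonneg (G : Matrix ι ι ℂ) :
    0 ≤ ((Gᴴ * G).trace).re := by
  rw [trace_conjTranspose_mul_self_re]
  positivity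

omit [DecidableEq ι] in
/-- Cauchy–Schwarz for the Frobenius inner product (real part). -/
lemma re_trace_CS (G H : Matrix ι ι ℂ) :
    ((Gᴴ * H).trace).re ≤
      Real.sqrt ((Gᴴ * G).trace).re * Real.sqrt ((Hᴴ * H).trace).re := by
  set X := ∑ p : ι × ι, ‖G p.1 p.2‖ ^ 2 with hX
  set Y := ∑ p : ι × ι, ‖H p.1 p.2‖ ^ 2 with hY
  set S := ∑ p : ι × ι, ‖G p.1 p.2‖ * ‖H p.1 p.2‖ with hS
  have hXnn : (0:ℝ) ≤ X := by rw [hX]; positivity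
  have hSnn : (0:ℝ) ≤ S := by rw [hS]; positivity
  have h1 : ((Gᴴ * H).trace).re ≤ S := by
    rw [trace_conjTranspose_mul, Complex.re_sum]
    refine Finset.sum_le_sum fun p _ => ?_
    calc (star (G p.1 p.2) * H p.1 p.2).re
        ≤ ‖star (G p.1 p.2) * H p.1 p.2‖ := Complex.re_le_norm _
      _ = ‖G p.1 p.2‖ * ‖H p.1 p.2‖ := by
          rw [Complex.star_def, norm_mul, Complex.norm_conj]
  have h2 : S ^ 2 ≤ X * Y := Finset.sum_mul_sq_le_sq_mul_sq Finset.univ _ _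
  have h3 : S ≤ Real.sqrt X * Real.sqrt Y := by
    calc S = Real.sqrt (S ^ 2) := (Real.sqrt_sq hSnn).symm
      _ ≤ Real.sqrt (X * Y) := Real.sqrt_le_sqrt h2
      _ = Real.sqrt X * Real.sqrt Y := Real.sqrt_mul hXnn Y
  rw [trace_conjTranspose_mul_self_re, trace_conjTranspose_mul_self_re]
  exact h1.trans h3



lemma conj_mul_conj (U X Y : Matrix ι ι ℂ) (hU : star U * U = 1) :
    (U * X * star U) * (U * Y * star U) = U * (X * Y) * star U := by
  have h : ∀ a : Matrix ι ι ℂ, a * star U * U = a := fun a => by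
    rw [mul_assoc, hU, mul_one]
  calc (U * X * star U) * (U * Y * star U) = (U * X * star U * U) * Y * star U := by
        simp only [mul_assoc]
      _ = U * (X * Y) * star U := by rw [h (U * X)]; simp only [mul_assoc]

lemma trace_conj (U X : Matrix ι ι ℂ) (hU : star U * U = 1) :
    (U * X * star U).trace = X.trace := by
  rw [trace_mul_cycle, hU, one_mul]

lemma unitary_conj_posSemidef (U : Matrix ι ι ℂ) (f : ι → ℝ) (hf : ∀ i, 0 ≤ f i) :
    (U * Matrix.diagonal (fun i => (f i : ℂ)) * star U).PosSemidef := by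
  have hD : (Matrix.diagonal (fun i => ((f i : ℝ) : ℂ))).PosSemidef :=
    Matrix.PosSemidef.diagonal fun i => Complex.zero_le_real.2 (hf i)
  simpa [Matrix.star_eq_conjTranspose] using hD.mul_mul_conjTranspose_same U

lemma sign_bounds (x : ℝ) : -1 ≤ Real.sign x ∧ Real.sign x ≤ 1 := by
  rcases lt_trichotomy x 0 with h | h | h
  · rw [Real.sign_of_neg h]; norm_num
  · rw [h, Real.sign_zero]; norm_num
  · rw [Real.sign_of_pos h]; norm_num

lemma self_mul_sign (x : ℝ) : x * Real.sign x = |x| := by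
  rcases lt_trichotomy x 0 with h | h | h
  · rw [Real.sign_of_neg h, abs_of_neg h]; ring
  · rw [h, Real.sign_zero, abs_zero]; ring
  · rw [Real.sign_of_pos h, abs_of_pos h]; ring

section herm
variable {X : Matrix ι ι ℂ} (hX : X.IsHermitian)

lemma spectral_c : X = (hX.eigenvectorUnitary : Matrix ι ι ℂ) *
    Matrix.diagonal (fun i => ((hX.eigenvalues i : ℝ) : ℂ)) *
    star (hX.eigenvectorUnitary : Matrix ι ι ℂ) :=
  hX.spectral_theorem

lemma traceNorm_hermitian : traceNorm X = ∑ i, |hX.eigenvalues i| := by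
  set U := (hX.eigenvectorUnitary : Matrix ι ι ℂ) with hUdef
  have hU1 : star U * U = 1 := Unitary.coe_star_mul_self hX.eigenvectorUnitary
  set μ := hX.eigenvalues with hμ
  set C := U * Matrix.diagonal (fun i => ((|μ i| : ℝ) : ℂ)) * star U with hC
  have hCpsd : C.PosSemidef := unitary_conj_posSemidef U _ (fun i => abs_nonneg _)
  have hXX := Matrix.posSemidef_conjTranspose_mul_self X
  have hXd := spectral_c hX
  have hsq : C ^ 2 = Xᴴ * X := by
    rw [pow_two, hC, conj_mul_conj _ _ _ hU1]
    calc U * (Matrix.diagonal (fun i => ((|μ i| : ℝ) : ℂ)) *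
            Matrix.diagonal (fun i => ((|μ i| : ℝ) : ℂ))) * star U
        = U * (Matrix.diagonal (fun i => ((μ i : ℝ) : ℂ)) *
            Matrix.diagonal (fun i => ((μ i : ℝ) : ℂ))) * star U := by
          rw [Matrix.diagonal_mul_diagonal, Matrix.diagonal_mul_diagonal]
          have hfun : (fun i => ((|μ i| : ℝ) : ℂ) * ((|μ i| : ℝ) : ℂ))
              = (fun i => ((μ i : ℝ) : ℂ) * ((μ i : ℝ) : ℂ)) := by
            funext i
            rw [← Complex.ofReal_mul, ← Complex.ofReal_mul, abs_mul_abs_self]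
          rw [hfun]
      _ = (U * Matrix.diagonal (fun i => ((μ i : ℝ) : ℂ)) * star U) *
            (U * Matrix.diagonal (fun i => ((μ i : ℝ) : ℂ)) * star U) := by
          rw [conj_mul_conj _ _ _ hU1]
      _ = Xᴴ * X := by rw [← hXd, hX.eq]
  have heq : C = posSemidefSqrt hXX := psd_eq_sqrt_of_sq_eq hCpsd hXX hsq
  rw [traceNorm, ← heq, hC, trace_conj _ _ hU1, Matrix.trace_diagonal, Complex.re_sum]
  simp

lemma sqrt_trace_re {N : Matrix ι ι ℂ} (hN : N.PosSemidef) :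
    ((posSemidefSqrt hN).trace).re = ∑ i, Real.sqrt (hN.1.eigenvalues i) := by
  set U := (hN.1.eigenvectorUnitary : Matrix ι ι ℂ) with hUdef
  have hU1 : star U * U = 1 := Unitary.coe_star_mul_self hN.1.eigenvectorUnitary
  set μ := hN.1.eigenvalues with hμ
  set C := U * Matrix.diagonal (fun i => ((Real.sqrt (μ i) : ℝ) : ℂ)) * star U with hC
  have hCpsd : C.PosSemidef := unitary_conj_posSemidef U _ (fun i => Real.sqrt_nonneg _)
  have hsq : C ^ 2 = N := by
    rw [pow_two, hC, conj_mul_conj _ _ _ hU1, Matrix.diagonal_mul_diagonal]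
    have : (fun i => ((Real.sqrt (μ i) : ℝ) : ℂ) * ((Real.sqrt (μ i) : ℝ) : ℂ))
        = fun i => ((μ i : ℝ) : ℂ) := by
      funext i
      rw [← Complex.ofReal_mul, Real.mul_self_sqrt (hN.eigenvalues_nonneg i)]
    rw [this, ← spectral_c hN.1]
  have heq : C = posSemidefSqrt hN := psd_eq_sqrt_of_sq_eq hCpsd hN hsq
  rw [← heq, hC, trace_conj _ _ hU1, Matrix.trace_diagonal, Complex.re_sum]
  simp



end herm

variable {X : Matrix ι ι ℂ}

/-- conjugated diagonal matrices: 1 minus -/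
lemma one_sub_conj_diag (U : Matrix ι ι ℂ) (hU2 : U * star U = 1) (f : ι → ℝ) :
    1 - U * Matrix.diagonal (fun i => (f i : ℂ)) * star U
      = U * Matrix.diagonal (fun i => ((1 - f i : ℝ) : ℂ)) * star U := by
  have hfun : (Matrix.diagonal (fun i => ((1 - f i : ℝ) : ℂ)))
      = 1 - Matrix.diagonal (fun i => (f i : ℂ)) := by
    have h0 : (fun i => ((1 - f i : ℝ) : ℂ)) = (fun _ => (1:ℂ)) - (fun i => ((f i:ℝ):ℂ)) := by
      funext i; simp
    rw [h0]
    rw [show ((fun _ => (1:ℂ)) - (fun i => ((f i:ℝ):ℂ))) = (fun i => (1:ℂ) - ((f i:ℝ):ℂ)) from rfl]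
    rw [← Matrix.diagonal_sub, Matrix.diagonal_one]
  rw [hfun, Matrix.mul_sub, Matrix.sub_mul, mul_one, hU2]

lemma one_add_conj_diag (U : Matrix ι ι ℂ) (hU2 : U * star U = 1) (f : ι → ℝ) :
    1 + U * Matrix.diagonal (fun i => (f i : ℂ)) * star U
      = U * Matrix.diagonal (fun i => ((1 + f i : ℝ) : ℂ)) * star U := by
  have hfun : (Matrix.diagonal (fun i => ((1 + f i : ℝ) : ℂ)))
      = 1 + Matrix.diagonal (fun i => (f i : ℂ)) := by
    have h0 : (fun i => ((1 + f i : ℝ) : ℂ)) = (fun _ => (1:ℂ)) + (fun i => ((f i:ℝ):ℂ)) := by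
      funext i; simp
    rw [h0]
    rw [show ((fun _ => (1:ℂ)) + (fun i => ((f i:ℝ):ℂ))) = (fun i => (1:ℂ) + ((f i:ℝ):ℂ)) from rfl]
    rw [← Matrix.diagonal_add, Matrix.diagonal_one]
  rw [hfun, Matrix.mul_add, Matrix.add_mul, mul_one, hU2]

lemma exists_sign (hX : X.IsHermitian) :
    ∃ W G₁ G₂ : Matrix ι ι ℂ,
      (1 - W).PosSemidef ∧ (1 + W).PosSemidef ∧
      G₁ᴴ = G₁ ∧ G₂ᴴ = G₂ ∧
      G₁ * G₁ = 1 - W ∧ G₂ * G₂ = 1 + W ∧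
      ((X * W).trace).re = traceNorm X := by
  set U := (hX.eigenvectorUnitary : Matrix ι ι ℂ) with hUdef
  have hU1 : star U * U = 1 := Unitary.coe_star_mul_self hX.eigenvectorUnitary
  have hU2 : U * star U = 1 := Unitary.coe_mul_star_self hX.eigenvectorUnitary
  set μ := hX.eigenvalues with hμ
  set s : ι → ℝ := fun i => Real.sign (μ i) with hs
  refine ⟨U * Matrix.diagonal (fun i => ((s i : ℝ) : ℂ)) * star U,
    U * Matrix.diagonal (fun i => ((Real.sqrt (1 - s i) : ℝ) : ℂ)) * star U,
    U * Matrix.diagonal (fun i => ((Real.sqrt (1 + s i) : ℝ) : ℂ)) * star U,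
    ?_, ?_, ?_, ?_, ?_, ?_, ?_⟩
  · rw [one_sub_conj_diag U hU2]
    exact unitary_conj_posSemidef U _ (fun i => by
      have := (sign_bounds (μ i)).2; simp only [hs]; linarith)
  · rw [one_add_conj_diag U hU2]
    exact unitary_conj_posSemidef U _ (fun i => by
      have := (sign_bounds (μ i)).1; simp only [hs]; linarith)
  · exact (unitary_conj_posSemidef U _ (fun i => Real.sqrt_nonneg _)).1
  · exact (unitary_conj_posSemidef U _ (fun i => Real.sqrt_nonneg _)).1
  · have hf : (fun i => ((Real.sqrt (1 - s i) : ℝ) : ℂ) * ((Real.sqrt (1 - s i) : ℝ) : ℂ))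
        = (fun i => ((1 - s i : ℝ) : ℂ)) := by
      funext i
      rw [← Complex.ofReal_mul, Real.mul_self_sqrt (by
        have h := (sign_bounds (μ i)).2
        have hsi : s i = Real.sign (μ i) := rfl
        linarith)]
    rw [conj_mul_conj _ _ _ hU1, Matrix.diagonal_mul_diagonal, hf,
      one_sub_conj_diag U hU2]
  · have hf : (fun i => ((Real.sqrt (1 + s i) : ℝ) : ℂ) * ((Real.sqrt (1 + s i) : ℝ) : ℂ))
        = (fun i => ((1 + s i : ℝ) : ℂ)) := by
      funext i
      rw [← Complex.ofReal_mul, Real.mul_self_sqrt (by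
        have h := (sign_bounds (μ i)).1
        have hsi : s i = Real.sign (μ i) := rfl
        linarith)]
    rw [conj_mul_conj _ _ _ hU1, Matrix.diagonal_mul_diagonal, hf,
      one_add_conj_diag U hU2]
  · conv_lhs => rw [spectral_c hX]
    rw [conj_mul_conj _ _ _ hU1, trace_conj _ _ hU1, Matrix.diagonal_mul_diagonal,
      Matrix.trace_diagonal, traceNorm_hermitian hX, Complex.re_sum]
    congr 1
    funext i
    rw [← Complex.ofReal_mul, Complex.ofReal_re, self_mul_sign]

lemma re_trace_mul_le_traceNorm (hX : X.IsHermitian) {V : Matrix ι ι ℂ}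
    (h1 : (1 - V).PosSemidef) (h2 : (1 + V).PosSemidef) :
    ((X * V).trace).re ≤ traceNorm X := by
  set U := (hX.eigenvectorUnitary : Matrix ι ι ℂ) with hUdef
  have hU1 : star U * U = 1 := Unitary.coe_star_mul_self hX.eigenvectorUnitary
  set μ := hX.eigenvalues with hμ
  set V' := star U * V * U with hV'
  have htr : (X * V).trace = (Matrix.diagonal (fun i => ((μ i : ℝ) : ℂ)) * V').trace := by
    conv_lhs => rw [spectral_c hX]
    rw [trace_mul_comm]
    rw [show V * (U * Matrix.diagonal (fun i => ((μ i : ℝ) : ℂ)) * star U)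
        = (V * U) * (Matrix.diagonal (fun i => ((μ i : ℝ) : ℂ)) * star U) from by
      simp only [mul_assoc]]
    rw [trace_mul_comm]
    congr 1
    simp only [hV', mul_assoc]
  have hsub : star U * (1 - V) * U = 1 - V' := by
    rw [Matrix.mul_sub, mul_one, Matrix.sub_mul, hU1, ← hV']
  have hadd : star U * (1 + V) * U = 1 + V' := by
    rw [Matrix.mul_add, mul_one, Matrix.add_mul, hU1, ← hV']
  have hc1 : (1 - V').PosSemidef := by
    rw [← hsub]
    simpa [Matrix.star_eq_conjTranspose] using h1.conjTranspose_mul_mul_same U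
  have hc2 : (1 + V').PosSemidef := by
    rw [← hadd]
    simpa [Matrix.star_eq_conjTranspose] using h2.conjTranspose_mul_mul_same U
  have hbound : ∀ i, -1 ≤ (V' i i).re ∧ (V' i i).re ≤ 1 := by
    intro i
    have ha := diag_re_nonneg hc1 i
    have hb := diag_re_nonneg hc2 i
    rw [Matrix.sub_apply, Matrix.one_apply_eq, Complex.sub_re, Complex.one_re] at ha
    rw [Matrix.add_apply, Matrix.one_apply_eq, Complex.add_re, Complex.one_re] at hb
    constructor <;> linarith
  rw [htr]
  have hdiag : (Matrix.diagonal (fun i => ((μ i : ℝ) : ℂ)) * V').trace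
      = ∑ i, (μ i : ℂ) * V' i i := by
    simp [Matrix.trace, Matrix.diag, Matrix.diagonal_mul]
  rw [hdiag, Complex.re_sum, traceNorm_hermitian hX]
  refine Finset.sum_le_sum fun i _ => ?_
  have : ((μ i : ℂ) * V' i i).re = μ i * (V' i i).re := by
    simp [Complex.mul_re]
  rw [this]
  rcases le_or_gt 0 (μ i) with h | h
  · calc μ i * (V' i i).re ≤ μ i * 1 :=
        mul_le_mul_of_nonneg_left (hbound i).2 h
      _ = μ i := mul_one _
      _ ≤ |μ i| := le_abs_self _
  · calc μ i * (V' i i).re ≤ μ i * (-1) :=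
        mul_le_mul_of_nonpos_left (hbound i).1 h.le
      _ = -(μ i) := by ring
      _ ≤ |μ i| := neg_le_abs _


lemma trace_conj' (U X : Matrix ι ι ℂ) (hU : U * star U = 1) :
    (star U * X * U).trace = X.trace := by
  rw [trace_mul_cycle, hU, one_mul]

lemma traceNorm_eq_sum_sqrt (M : Matrix ι ι ℂ) :
    traceNorm M = ∑ i, Real.sqrt ((Matrix.posSemidef_conjTranspose_mul_self M).1.eigenvalues i) :=
  sqrt_trace_re (Matrix.posSemidef_conjTranspose_mul_self M)

lemma traceNorm_nonneg (M : Matrix ι ι ℂ) : 0 ≤ traceNorm M := by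
  rw [traceNorm_eq_sum_sqrt]
  exact Finset.sum_nonneg fun i _ => Real.sqrt_nonneg _

/-- key factorization bound: if `M + M = X₁ᴴY₁ + X₂ᴴY₂` then
`2‖M‖₁ ≤ ‖X₁‖F‖Y₁‖F + ‖X₂‖F‖Y₂‖F`. -/
lemma two_mul_traceNorm_le (M X₁ Y₁ X₂ Y₂ : Matrix ι ι ℂ)
    (h : M + M = X₁ᴴ * Y₁ + X₂ᴴ * Y₂) :
    2 * traceNorm M ≤
      Real.sqrt ((X₁ᴴ * X₁).trace).re * Real.sqrt ((Y₁ᴴ * Y₁).trace).re +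
      Real.sqrt ((X₂ᴴ * X₂).trace).re * Real.sqrt ((Y₂ᴴ * Y₂).trace).re := by
  have hMM := Matrix.posSemidef_conjTranspose_mul_self M
  set hH := hMM.1 with hHdef
  set U := (hH.eigenvectorUnitary : Matrix ι ι ℂ) with hUdef
  have hU1 : star U * U = 1 := Unitary.coe_star_mul_self hH.eigenvectorUnitary
  have hU2 : U * star U = 1 := Unitary.coe_mul_star_self hH.eigenvectorUnitary
  set lam := hH.eigenvalues with hlam
  have hlnn : ∀ i, 0 ≤ lam i := hMM.eigenvalues_nonneg
  have key : star U * (Mᴴ * M) * U = Matrix.diagonal (fun i => ((lam i : ℝ) : ℂ)) :=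
    by have h0 := hH.conjStarAlgAut_star_eigenvectorUnitary; rw [Unitary.conjStarAlgAut_star_apply] at h0; exact h0
  set s : ι → ℝ := fun i => Real.sqrt (lam i) with hs
  set sp : ι → ℝ := fun i => if lam i = 0 then 0 else (Real.sqrt (lam i))⁻¹ with hsp
  set T : Matrix ι ι ℂ := M * U * Matrix.diagonal (fun i => ((sp i : ℝ) : ℂ)) with hT
  have hTH : Tᴴ = Matrix.diagonal (fun i => ((sp i : ℝ) : ℂ)) * (star U * Mᴴ) := by
    rw [hT, Matrix.conjTranspose_mul, Matrix.conjTranspose_mul, Matrix.diagonal_conjTranspose]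
    have : (star fun i => ((sp i : ℝ) : ℂ)) = fun i => ((sp i : ℝ) : ℂ) := by
      funext i
      simp [Complex.star_def, Complex.conj_ofReal]
    rw [this, Matrix.star_eq_conjTranspose]
  -- Tᴴ (M U) = diag s
  have hTMU : Tᴴ * (M * U) = Matrix.diagonal (fun i => ((s i : ℝ) : ℂ)) := by
    have h1 : Tᴴ * (M * U) =
        Matrix.diagonal (fun i => ((sp i : ℝ) : ℂ)) * (star U * (Mᴴ * M) * U) := by
      rw [hTH]; simp only [mul_assoc]
    rw [h1, key, Matrix.diagonal_mul_diagonal]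
    refine congrArg _ (funext fun i => ?_)
    show ((sp i : ℝ) : ℂ) * ((lam i : ℝ) : ℂ) = ((s i : ℝ) : ℂ)
    rw [← Complex.ofReal_mul]
    congr 1
    by_cases hz : lam i = 0
    · simp [hsp, hs, hz]
    · have hpos : 0 < Real.sqrt (lam i) := Real.sqrt_pos.2 (lt_of_le_of_ne (hlnn i) (Ne.symm hz))
      have hss : Real.sqrt (lam i) * Real.sqrt (lam i) = lam i := Real.mul_self_sqrt (hlnn i)
      have : sp i = (Real.sqrt (lam i))⁻¹ := by simp [hsp, hz]
      rw [this]
      have : s i = Real.sqrt (lam i) := rfl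
      rw [this]
      field_simp
      rw [Real.sq_sqrt (hlnn i)]
  -- Tᴴ T = diag ind
  have hTT : Tᴴ * T = Matrix.diagonal (fun i => (((if lam i = 0 then (0:ℝ) else 1) : ℝ) : ℂ)) := by
    have h1 : Tᴴ * T = (Tᴴ * (M * U)) * Matrix.diagonal (fun i => ((sp i : ℝ) : ℂ)) := by
      rw [hT]; simp only [mul_assoc]
    rw [h1, hTMU, Matrix.diagonal_mul_diagonal]
    refine congrArg _ (funext fun i => ?_)
    show ((s i : ℝ) : ℂ) * ((sp i : ℝ) : ℂ) = (((if lam i = 0 then (0:ℝ) else 1) : ℝ) : ℂ)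
    rw [← Complex.ofReal_mul]
    congr 1
    by_cases hz : lam i = 0
    · simp [hsp, hs, hz]
    · have hpos : 0 < Real.sqrt (lam i) := Real.sqrt_pos.2 (lt_of_le_of_ne (hlnn i) (Ne.symm hz))
      have h1 : sp i = (Real.sqrt (lam i))⁻¹ := by simp [hsp, hz]
      have h2 : s i = Real.sqrt (lam i) := rfl
      rw [h1, h2, if_neg hz, mul_inv_cancel₀ hpos.ne']
  -- T * diag ind = T
  have hTind : T * Matrix.diagonal (fun i => (((if lam i = 0 then (0:ℝ) else 1) : ℝ) : ℂ)) = T := by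
    rw [hT]
    simp only [mul_assoc, Matrix.diagonal_mul_diagonal]
    have hfun : (fun i => ((sp i : ℝ) : ℂ) * (((if lam i = 0 then (0:ℝ) else 1) : ℝ) : ℂ))
        = fun i => ((sp i : ℝ) : ℂ) := by
      funext i
      by_cases hz : lam i = 0 <;> simp [hsp, hz]
    rw [hfun]
  -- p := T Tᴴ is a projection, 1 - p PSD
  have hpsq : (T * Tᴴ) * (T * Tᴴ) = T * Tᴴ := by
    calc (T * Tᴴ) * (T * Tᴴ) = T * (Tᴴ * T) * Tᴴ := by simp only [mul_assoc]
      _ = (T * Matrix.diagonal (fun i => (((if lam i = 0 then (0:ℝ) else 1) : ℝ) : ℂ))) * Tᴴ := by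
          rw [hTT, mul_assoc]
      _ = T * Tᴴ := by rw [hTind]
  have hermp : (T * Tᴴ)ᴴ = T * Tᴴ := by
    rw [Matrix.conjTranspose_mul, Matrix.conjTranspose_conjTranspose]
  have hproj : (1 - T * Tᴴ).PosSemidef := by
    have hfact : 1 - T * Tᴴ = (1 - T * Tᴴ)ᴴ * (1 - T * Tᴴ) := by
      rw [Matrix.conjTranspose_sub, Matrix.conjTranspose_one, hermp]
      rw [Matrix.mul_sub, mul_one, Matrix.sub_mul, one_mul, hpsq]
      abel
    rw [hfact]
    exact Matrix.posSemidef_conjTranspose_mul_self _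
  -- trace norm as sum
  have htn : 2 * traceNorm M = ((Tᴴ * (M + M) * U).trace).re := by
    have h1 : Tᴴ * (M + M) * U = Matrix.diagonal (fun i => ((s i : ℝ) : ℂ))
        + Matrix.diagonal (fun i => ((s i : ℝ) : ℂ)) := by
      rw [Matrix.mul_add, Matrix.add_mul, ← hTMU]; simp only [mul_assoc]
    rw [h1, traceNorm_eq_sum_sqrt M, Matrix.trace_add, Matrix.trace_diagonal, Complex.add_re,
      Complex.re_sum]
    simp only [Complex.ofReal_re]
    ring
  -- split
  have hsplit : ((Tᴴ * (M + M) * U).trace).re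
      = (((X₁ * T)ᴴ * (Y₁ * U)).trace).re + (((X₂ * T)ᴴ * (Y₂ * U)).trace).re := by
    rw [h]
    have h2 : Tᴴ * (X₁ᴴ * Y₁ + X₂ᴴ * Y₂) * U
        = (X₁ * T)ᴴ * (Y₁ * U) + (X₂ * T)ᴴ * (Y₂ * U) := by
      rw [Matrix.conjTranspose_mul X₁ T, Matrix.conjTranspose_mul X₂ T,
        Matrix.mul_add, Matrix.add_mul]
      simp only [mul_assoc]
    rw [h2, Matrix.trace_add, Complex.add_re]
  -- bounds on factors
  have hXbound : ∀ X : Matrix ι ι ℂ, (((X * T)ᴴ * (X * T)).trace).re ≤ ((Xᴴ * X).trace).re := by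
    intro X
    have h1 : (X * T)ᴴ * (X * T) = Tᴴ * (Xᴴ * X) * T := by
      rw [Matrix.conjTranspose_mul]; simp only [mul_assoc]
    have h2 : ((Tᴴ * (Xᴴ * X) * T).trace) = (((Xᴴ * X) * (T * Tᴴ)).trace) := by
      rw [Matrix.trace_mul_cycle Tᴴ (Xᴴ * X) T, Matrix.trace_mul_comm (T * Tᴴ) (Xᴴ * X)]
    have h3 : 0 ≤ (((Xᴴ * X) * (1 - T * Tᴴ)).trace).re :=
      trace_mul_psd_re_nonneg (Matrix.posSemidef_conjTranspose_mul_self X) hproj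
    rw [Matrix.mul_sub, mul_one, Matrix.trace_sub, Complex.sub_re] at h3
    rw [h1, h2]
    linarith
  have hYeq : ∀ Y : Matrix ι ι ℂ, (((Y * U)ᴴ * (Y * U)).trace) = ((Yᴴ * Y).trace) := by
    intro Y
    have h1 : (Y * U)ᴴ * (Y * U) = star U * (Yᴴ * Y) * U := by
      rw [Matrix.conjTranspose_mul, ← Matrix.star_eq_conjTranspose U]; simp only [mul_assoc]
    rw [h1, trace_conj' _ _ hU2]
  -- finish
  rw [htn, hsplit]
  have hcs1 := re_trace_CS (X₁ * T) (Y₁ * U)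
  have hcs2 := re_trace_CS (X₂ * T) (Y₂ * U)
  have hm1 : Real.sqrt ((((X₁ * T)ᴴ * (X₁ * T)).trace).re) ≤ Real.sqrt (((X₁ᴴ * X₁).trace).re) :=
    Real.sqrt_le_sqrt (hXbound X₁)
  have hm2 : Real.sqrt ((((X₂ * T)ᴴ * (X₂ * T)).trace).re) ≤ Real.sqrt (((X₂ᴴ * X₂).trace).re) :=
    Real.sqrt_le_sqrt (hXbound X₂)
  have hy1 : Real.sqrt ((((Y₁ * U)ᴴ * (Y₁ * U)).trace).re) = Real.sqrt (((Y₁ᴴ * Y₁).trace).re) := by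
    rw [hYeq]
  have hy2 : Real.sqrt ((((Y₂ * U)ᴴ * (Y₂ * U)).trace).re) = Real.sqrt (((Y₂ᴴ * Y₂).trace).re) := by
    rw [hYeq]
  have hnn1 : 0 ≤ Real.sqrt ((((Y₁ * U)ᴴ * (Y₁ * U)).trace).re) := Real.sqrt_nonneg _
  have hnn2 : 0 ≤ Real.sqrt ((((Y₂ * U)ᴴ * (Y₂ * U)).trace).re) := Real.sqrt_nonneg _
  have hnn3 : 0 ≤ Real.sqrt ((((X₁ * T)ᴴ * (X₁ * T)).trace).re) := Real.sqrt_nonneg _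
  have hnn4 : 0 ≤ Real.sqrt ((((X₂ * T)ᴴ * (X₂ * T)).trace).re) := Real.sqrt_nonneg _
  calc (((X₁ * T)ᴴ * (Y₁ * U)).trace).re + (((X₂ * T)ᴴ * (Y₂ * U)).trace).re
      ≤ Real.sqrt ((((X₁ * T)ᴴ * (X₁ * T)).trace).re) * Real.sqrt ((((Y₁ * U)ᴴ * (Y₁ * U)).trace).re)
        + Real.sqrt ((((X₂ * T)ᴴ * (X₂ * T)).trace).re) * Real.sqrt ((((Y₂ * U)ᴴ * (Y₂ * U)).trace).re) := by
        exact add_le_add hcs1 hcs2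
    _ ≤ Real.sqrt (((X₁ᴴ * X₁).trace).re) * Real.sqrt (((Y₁ᴴ * Y₁).trace).re)
        + Real.sqrt (((X₂ᴴ * X₂).trace).re) * Real.sqrt (((Y₂ᴴ * Y₂).trace).re) := by
        rw [← hy1, ← hy2]
        exact add_le_add (mul_le_mul_of_nonneg_right hm1 hnn1) (mul_le_mul_of_nonneg_right hm2 hnn2)


/-- Powers–Størmer inequality. -/
lemma powers_stormer {P Q : Matrix ι ι ℂ} (hP : P.PosSemidef) (hQ : Q.PosSemidef) :
    ((P * P).trace).re + ((Q * Q).trace).re - 2 * ((P * Q).trace).re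
      ≤ traceNorm (P * P - Q * Q) := by
  set R := P - Q with hR0
  have hR : R.IsHermitian := hP.1.sub hQ.1
  set X := P * P - Q * Q with hX0
  have hPPh : (P * P).IsHermitian := by
    show (P * P)ᴴ = P * P
    rw [Matrix.conjTranspose_mul, hP.1.eq]
  have hQQh : (Q * Q).IsHermitian := by
    show (Q * Q)ᴴ = Q * Q
    rw [Matrix.conjTranspose_mul, hQ.1.eq]
  have hXherm : X.IsHermitian := hPPh.sub hQQh
  set U := (hR.eigenvectorUnitary : Matrix ι ι ℂ) with hUdef
  have hU1 : star U * U = 1 := Unitary.coe_star_mul_self hR.eigenvectorUnitary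
  have hU2 : U * star U = 1 := Unitary.coe_mul_star_self hR.eigenvectorUnitary
  set d := hR.eigenvalues with hd
  have key : star U * R * U = Matrix.diagonal (fun i => ((d i : ℝ) : ℂ)) :=
    by have h0 := hR.conjStarAlgAut_star_eigenvectorUnitary; rw [Unitary.conjStarAlgAut_star_apply] at h0; exact h0
  set sg : ι → ℝ := fun i => Real.sign (d i) with hsg
  set W := U * Matrix.diagonal (fun i => ((sg i : ℝ) : ℂ)) * star U with hW
  have h1W : (1 - W).PosSemidef := by
    rw [hW, one_sub_conj_diag U hU2]
    exact unitary_conj_posSemidef U _ (fun i => by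
      have := (sign_bounds (d i)).2
      have hsi : sg i = Real.sign (d i) := rfl
      linarith)
  have h2W : (1 + W).PosSemidef := by
    rw [hW, one_add_conj_diag U hU2]
    exact unitary_conj_posSemidef U _ (fun i => by
      have := (sign_bounds (d i)).1
      have hsi : sg i = Real.sign (d i) := rfl
      linarith)
  set Y := star U * X * U with hY
  set S' := star U * (P + Q) * U with hS'
  set D := Matrix.diagonal (fun i => ((d i : ℝ) : ℂ)) with hD
  -- the two-sided identity
  have hXX : X + X = R * (P + Q) + (P + Q) * R := by
    rw [hX0, hR0]
    noncomm_ring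
  have e1 : star U * (R * (P + Q)) * U = D * S' := by
    have h1 : (star U * R * U) * (star U * (P + Q) * U) = star U * (R * (P + Q)) * U := by
      calc (star U * R * U) * (star U * (P + Q) * U)
          = star U * (R * ((U * star U) * ((P + Q) * U))) := by simp only [mul_assoc]
        _ = star U * (R * (P + Q)) * U := by rw [hU2, one_mul]; simp only [mul_assoc]
    rw [← h1, key]
  have e2 : star U * ((P + Q) * R) * U = S' * D := by
    have h1 : (star U * (P + Q) * U) * (star U * R * U) = star U * ((P + Q) * R) * U := by
      calc (star U * (P + Q) * U) * (star U * R * U)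
          = star U * ((P + Q) * ((U * star U) * (R * U))) := by simp only [mul_assoc]
        _ = star U * ((P + Q) * R) * U := by rw [hU2, one_mul]; simp only [mul_assoc]
    rw [← h1, key]
  have hY2 : Y + Y = D * S' + S' * D := by
    calc Y + Y = star U * (X + X) * U := by
          rw [hY, Matrix.mul_add, Matrix.add_mul]
      _ = star U * (R * (P + Q)) * U + star U * ((P + Q) * R) * U := by
          rw [hXX, Matrix.mul_add, Matrix.add_mul, Matrix.mul_add, Matrix.add_mul]
      _ = D * S' + S' * D := by rw [e1, e2]
  have hYii : ∀ i, Y i i = (d i : ℂ) * S' i i := by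
    intro i
    have h := congrArg (fun m : Matrix ι ι ℂ => m i i) hY2
    simp only [Matrix.add_apply, hD, Matrix.diagonal_mul, Matrix.mul_diagonal] at h
    linear_combination h / 2
  -- positivity of S' ± D diagonal entries
  have hplus : (S' + D).PosSemidef := by
    have h1 : S' + D = star U * (P + P) * U := by
      rw [hS', ← key, ← Matrix.add_mul, ← Matrix.mul_add]
      congr 2
      rw [hR0]; abel
    rw [h1]
    have := (hP.add hP).conjTranspose_mul_mul_same U
    simpa [Matrix.star_eq_conjTranspose] using this
  have hminus : (S' - D).PosSemidef := by
    have h1 : S' - D = star U * (Q + Q) * U := by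
      rw [hS', ← key, ← Matrix.sub_mul, ← Matrix.mul_sub]
      congr 2
      rw [hR0]; abel
    rw [h1]
    have := (hQ.add hQ).conjTranspose_mul_mul_same U
    simpa [Matrix.star_eq_conjTranspose] using this
  have hSd : ∀ i, 0 ≤ (S' i i).re + d i ∧ 0 ≤ (S' i i).re - d i := by
    intro i
    have h1 := diag_re_nonneg hplus i
    have h2 := diag_re_nonneg hminus i
    simp only [Matrix.add_apply, Matrix.sub_apply, hD, Matrix.diagonal_apply_eq,
      Complex.add_re, Complex.sub_re, Complex.ofReal_re] at h1 h2
    exact ⟨h1, h2⟩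
  -- trace(X W) = ∑ dᵢ sgᵢ S'ᵢᵢ.re
  have htrXW : ((X * W).trace).re = ∑ i, (d i * sg i) * (S' i i).re := by
    have h1 : (X * W).trace = (Y * Matrix.diagonal (fun i => ((sg i : ℝ) : ℂ))).trace := by
      rw [hW]
      calc (X * (U * Matrix.diagonal (fun i => ((sg i : ℝ) : ℂ)) * star U)).trace
          = ((X * U * Matrix.diagonal (fun i => ((sg i : ℝ) : ℂ))) * star U).trace := by
            simp only [mul_assoc]
        _ = (star U * (X * U * Matrix.diagonal (fun i => ((sg i : ℝ) : ℂ)))).trace := by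
            rw [Matrix.trace_mul_comm]
        _ = (Y * Matrix.diagonal (fun i => ((sg i : ℝ) : ℂ))).trace := by
            rw [hY]; simp only [mul_assoc]
    rw [h1, Matrix.trace]
    rw [Complex.re_sum]
    congr 1
    funext i
    rw [Matrix.diag]
    rw [Matrix.mul_diagonal]
    rw [hYii i]
    have : (d i : ℂ) * S' i i * ((sg i : ℝ) : ℂ) = ((d i * sg i : ℝ) : ℂ) * S' i i := by
      push_cast; ring
    rw [this]
    simp [Complex.mul_re]
  -- trace(R²) = ∑ dᵢ²
  have htrRR : ((R * R).trace).re = ∑ i, (d i) ^ 2 := by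
    have h1 : (R * R).trace = ((star U * (R * R) * U)).trace := (trace_conj' _ _ hU2).symm
    have h2 : star U * (R * R) * U = D * D := by
      calc star U * (R * R) * U = (star U * R * U) * (star U * R * U) := by
            calc star U * (R * R) * U
                = star U * (R * ((U * star U) * (R * U))) := by rw [hU2, one_mul]; simp only [mul_assoc]
              _ = (star U * R * U) * (star U * R * U) := by simp only [mul_assoc]
        _ = D * D := by rw [key]
    rw [h1, h2, hD, Matrix.diagonal_mul_diagonal, Matrix.trace_diagonal, Complex.re_sum]
    congr 1
    funext i
    rw [← Complex.ofReal_mul, Complex.ofReal_re, sq]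
  -- LHS = trace(R²)
  have hLHS : ((P * P).trace).re + ((Q * Q).trace).re - 2 * ((P * Q).trace).re
      = ((R * R).trace).re := by
    have hexp : R * R = P * P + Q * Q - P * Q - Q * P := by
      rw [hR0]; noncomm_ring
    rw [hexp, Matrix.trace_sub, Matrix.trace_sub, Matrix.trace_add,
      Matrix.trace_mul_comm Q P, Complex.sub_re, Complex.sub_re, Complex.add_re]
    ring
  -- pointwise inequality and conclusion
  have hpoint : ∀ i, (d i) ^ 2 ≤ (d i * sg i) * (S' i i).re := by
    intro i
    have h1 := (hSd i).1
    have h2 := (hSd i).2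
    have hsi : sg i = Real.sign (d i) := rfl
    rcases lt_trichotomy (d i) 0 with h | h | h
    · rw [hsi, Real.sign_of_neg h]
      nlinarith
    · rw [hsi, h, Real.sign_zero]
      nlinarith
    · rw [hsi, Real.sign_of_pos h]
      nlinarith
  calc ((P * P).trace).re + ((Q * Q).trace).re - 2 * ((P * Q).trace).re
      = ∑ i, (d i) ^ 2 := by rw [hLHS, htrRR]
    _ ≤ ∑ i, (d i * sg i) * (S' i i).re := Finset.sum_le_sum fun i _ => hpoint i
    _ = ((X * W).trace).re := htrXW.symm
    _ ≤ traceNorm X := re_trace_mul_le_traceNorm hXherm h1W h2W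

lemma scalar_end {a b α β c : ℝ} (h1 : 0 ≤ a - α) (h2 : 0 ≤ a + α)
    (h3 : 0 ≤ b - β) (h4 : 0 ≤ b + β) (hc : 0 ≤ c)
    (hkey : 2 * c ≤ Real.sqrt (a - α) * Real.sqrt (b - β)
      + Real.sqrt (a + α) * Real.sqrt (b + β)) :
    α - β ≤ Real.sqrt ((a + b) ^ 2 - 4 * c ^ 2) := by
  set s1 := Real.sqrt (a - α) with hs1
  set s2 := Real.sqrt (a + α) with hs2
  set s3 := Real.sqrt (b - β) with hs3
  set s4 := Real.sqrt (b + β) with hs4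
  have q1 : s1 ^ 2 = a - α := Real.sq_sqrt h1
  have q2 : s2 ^ 2 = a + α := Real.sq_sqrt h2
  have q3 : s3 ^ 2 = b - β := Real.sq_sqrt h3
  have q4 : s4 ^ 2 = b + β := Real.sq_sqrt h4
  have n1 : 0 ≤ s1 := Real.sqrt_nonneg _
  have n2 : 0 ≤ s2 := Real.sqrt_nonneg _
  have n3 : 0 ≤ s3 := Real.sqrt_nonneg _
  have n4 : 0 ≤ s4 := Real.sqrt_nonneg _
  have hsq : 4 * c ^ 2 ≤ (a + b) ^ 2 - (α - β) ^ 2 := by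
    nlinarith [sq_nonneg (s1 * s2 - s3 * s4), mul_nonneg (mul_nonneg n1 n3) (mul_nonneg n2 n4),
      mul_nonneg (sub_nonneg.2 hkey) (by positivity : (0:ℝ) ≤ s1 * s3 + s2 * s4 + 2 * c)]
  have h5 : (α - β) ^ 2 ≤ (a + b) ^ 2 - 4 * c ^ 2 := by nlinarith [sq_nonneg c]
  rcases le_or_gt (α - β) 0 with h | h
  · exact h.trans (Real.sqrt_nonneg _)
  · calc α - β = Real.sqrt ((α - β) ^ 2) := (Real.sqrt_sq h.le).symm
      _ ≤ Real.sqrt ((a + b) ^ 2 - 4 * c ^ 2) := Real.sqrt_le_sqrt h5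




theorem generalized_fvdg_aux {ι : Type*} [Fintype ι] [DecidableEq ι]
    (A B : Matrix ι ι ℂ) (hA : A.PosSemidef) (hB : B.PosSemidef) :
    (A.trace).re + (B.trace).re - 2 * ((matSqrt A * matSqrt B).trace).re
        ≤ traceNorm (A - B) ∧
    traceNorm (A - B)
        ≤ Real.sqrt (((A.trace).re + (B.trace).re) ^ 2
            - 4 * (traceNorm (matSqrt A * matSqrt B)) ^ 2) := by
  have hPA : matSqrt A = posSemidefSqrt hA := dif_pos hA
  have hQB : matSqrt B = posSemidefSqrt hB := dif_pos hB
  set P := matSqrt A with hPdef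
  set Q := matSqrt B with hQdef
  have hP : P.PosSemidef := by rw [hPA]; exact psd_sqrt_psd hA
  have hQ : Q.PosSemidef := by rw [hQB]; exact psd_sqrt_psd hB
  have hPP : P * P = A := by rw [hPA]; exact psd_sqrt_mul_self hA
  have hQQ : Q * Q = B := by rw [hQB]; exact psd_sqrt_mul_self hB
  have hXherm : (A - B).IsHermitian := hA.1.sub hB.1
  constructor
  · -- lower bound : Powers–Størmer
    have h := powers_stormer hP hQ
    rw [hPP, hQQ] at h
    exact h
  · -- upper bound
    obtain ⟨W, G₁, G₂, h1W, h2W, hG1h, hG2h, hG1sq, hG2sq, htrW⟩ := exists_sign hXherm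
    set X₁ := G₁ * P with hX₁def
    set Y₁ := G₁ * Q with hY₁def
    set X₂ := G₂ * P with hX₂def
    set Y₂ := G₂ * Q with hY₂def
    have e1 : X₁ᴴ * Y₁ = P * (1 - W) * Q := by
      rw [hX₁def, hY₁def, Matrix.conjTranspose_mul, hP.1.eq, hG1h, ← hG1sq]
      simp only [mul_assoc]
    have e2 : X₂ᴴ * Y₂ = P * (1 + W) * Q := by
      rw [hX₂def, hY₂def, Matrix.conjTranspose_mul, hP.1.eq, hG2h, ← hG2sq]
      simp only [mul_assoc]
    have f1 : X₁ᴴ * X₁ = P * (1 - W) * P := by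
      rw [hX₁def, Matrix.conjTranspose_mul, hP.1.eq, hG1h, ← hG1sq]
      simp only [mul_assoc]
    have f2 : X₂ᴴ * X₂ = P * (1 + W) * P := by
      rw [hX₂def, Matrix.conjTranspose_mul, hP.1.eq, hG2h, ← hG2sq]
      simp only [mul_assoc]
    have g1 : Y₁ᴴ * Y₁ = Q * (1 - W) * Q := by
      rw [hY₁def, Matrix.conjTranspose_mul, hQ.1.eq, hG1h, ← hG1sq]
      simp only [mul_assoc]
    have g2 : Y₂ᴴ * Y₂ = Q * (1 + W) * Q := by
      rw [hY₂def, Matrix.conjTranspose_mul, hQ.1.eq, hG2h, ← hG2sq]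
      simp only [mul_assoc]
    have hfact : P * Q + P * Q = X₁ᴴ * Y₁ + X₂ᴴ * Y₂ := by
      rw [e1, e2]; noncomm_ring
    -- trace identities
    have tr1 : ∀ N : Matrix ι ι ℂ, N.PosSemidef → (N * N = A) →
        ((N * (1 - W) * N).trace).re = (A.trace).re - ((A * W).trace).re := by
      intro N hN hNN
      have h1 : N * (1 - W) * N = N * N - N * W * N := by noncomm_ring
      have h2 : (N * W * N).trace = (A * W).trace := by
        rw [Matrix.trace_mul_cycle N W N, hNN]
      rw [h1, Matrix.trace_sub, h2, hNN, Complex.sub_re]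
    have tr2 : ∀ N : Matrix ι ι ℂ, N.PosSemidef → (N * N = A) →
        ((N * (1 + W) * N).trace).re = (A.trace).re + ((A * W).trace).re := by
      intro N hN hNN
      have h1 : N * (1 + W) * N = N * N + N * W * N := by noncomm_ring
      have h2 : (N * W * N).trace = (A * W).trace := by
        rw [Matrix.trace_mul_cycle N W N, hNN]
      rw [h1, Matrix.trace_add, h2, hNN, Complex.add_re]
    have tr1' : ∀ N : Matrix ι ι ℂ, N.PosSemidef → (N * N = B) →
        ((N * (1 - W) * N).trace).re = (B.trace).re - ((B * W).trace).re := by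
      intro N hN hNN
      have h1 : N * (1 - W) * N = N * N - N * W * N := by noncomm_ring
      have h2 : (N * W * N).trace = (B * W).trace := by
        rw [Matrix.trace_mul_cycle N W N, hNN]
      rw [h1, Matrix.trace_sub, h2, hNN, Complex.sub_re]
    have tr2' : ∀ N : Matrix ι ι ℂ, N.PosSemidef → (N * N = B) →
        ((N * (1 + W) * N).trace).re = (B.trace).re + ((B * W).trace).re := by
      intro N hN hNN
      have h1 : N * (1 + W) * N = N * N + N * W * N := by noncomm_ring
      have h2 : (N * W * N).trace = (B * W).trace := by
        rw [Matrix.trace_mul_cycle N W N, hNN]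
      rw [h1, Matrix.trace_add, h2, hNN, Complex.add_re]
    set a := (A.trace).re with ha
    set b := (B.trace).re with hb
    set al := ((A * W).trace).re with hal
    set be := ((B * W).trace).re with hbe
    have hX1tr : ((X₁ᴴ * X₁).trace).re = a - al := by rw [f1]; exact tr1 P hP hPP
    have hX2tr : ((X₂ᴴ * X₂).trace).re = a + al := by rw [f2]; exact tr2 P hP hPP
    have hY1tr : ((Y₁ᴴ * Y₁).trace).re = b - be := by rw [g1]; exact tr1' Q hQ hQQ
    have hY2tr : ((Y₂ᴴ * Y₂).trace).re = b + be := by rw [g2]; exact tr2' Q hQ hQQ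
    have hn1 : 0 ≤ a - al := hX1tr ▸ trace_conjTranspose_mul_self_re_nonneg X₁
    have hn2 : 0 ≤ a + al := hX2tr ▸ trace_conjTranspose_mul_self_re_nonneg X₂
    have hn3 : 0 ≤ b - be := hY1tr ▸ trace_conjTranspose_mul_self_re_nonneg Y₁
    have hn4 : 0 ≤ b + be := hY2tr ▸ trace_conjTranspose_mul_self_re_nonneg Y₂
    have hc : 0 ≤ traceNorm (P * Q) := traceNorm_nonneg _
    have hmaster := two_mul_traceNorm_le (P * Q) X₁ Y₁ X₂ Y₂ hfact
    rw [hX1tr, hX2tr, hY1tr, hY2tr] at hmaster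
    have hkey : 2 * traceNorm (P * Q) ≤ Real.sqrt (a - al) * Real.sqrt (b - be)
        + Real.sqrt (a + al) * Real.sqrt (b + be) := hmaster
    have hfin := scalar_end hn1 hn2 hn3 hn4 hc hkey
    have htn2 : traceNorm (A - B) = al - be := by
      rw [← htrW, Matrix.sub_mul, Matrix.trace_sub, Complex.sub_re]
    rw [htn2]
    exact hfin


/-- **Generalized Fuchs–van de Graaf inequalities**: for positive semidefinite
`A, B`, `Tr A + Tr B − 2 Tr[√A √B] ≤ ‖A − B‖₁ ≤ √((Tr A + Tr B)² − 4‖√A √B‖₁²)`. -/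
theorem generalized_fuchs_van_de_graaf {ι : Type*} [Fintype ι] [DecidableEq ι]
    (A B : Matrix ι ι ℂ) (hA : A.PosSemidef) (hB : B.PosSemidef) :
    (A.trace).re + (B.trace).re - 2 * ((matSqrt A * matSqrt B).trace).re
        ≤ traceNorm (A - B) ∧
    traceNorm (A - B)
        ≤ Real.sqrt (((A.trace).re + (B.trace).re) ^ 2
            - 4 * (traceNorm (matSqrt A * matSqrt B)) ^ 2) := by
  exact generalized_fvdg_aux A B hA hB

end QHT

end
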